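/- Given vectors φ_1,…,φ_N ∈ ℝ^K and scalars b_1,…,b_N ∈ ℝ, define f_pwm : ℝ^K → ℝ by f_pwm(α) = (1/N) ∑_{i=1}^N max(⟨φ_i, α⟩, b_i). Let C ⊆ ℝ^K be such that f_pwm is bounded above on C, let α^(0) ∈ C, and for each k ≥ 0 define d^(k) = (1/N) ∑_{i ∈ I(α^(k))} φ_i where I(α) = {i : ⟨φ_i, α⟩ ≥ b_i}, and suppose α^(k+1) ∈ C satisfies ⟨z, d^(k)⟩ ≤ ⟨α^(k+1), d^(k)⟩ for all z ∈ C. Then: (a) the sequence (f_pwm(α^(k)))_{k≥0} is non-decreasing and convergent; (b) for every ε > 0 there exists k ≥ 1 with f_pwm(α^(k)) − f_pwm(α^(k−1)) < ε; and (c) lim_{k→∞} ⟨α^(k+1) − α^(k), d^(k)⟩ = 0. -/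
import Mathlib


open scoped RealInnerProductSpace

/-- The sampled point-wise maximum objective of the paper. -/
noncomputable def fpwm {K N : ℕ} (φ : Fin N → EuclideanSpace ℝ (Fin K)) (b : Fin N → ℝ)
    (α : EuclideanSpace ℝ (Fin K)) : ℝ :=
  (1 / (N : ℝ)) * ∑ i, max ⟪φ i, α⟫ (b i)

/-- The explicit upper-subgradient of `fpwm` at `α` (equation (7) of the paper). -/
noncomputable def dsub {K N : ℕ} (φ : Fin N → EuclideanSpace ℝ (Fin K)) (b : Fin N → ℝ)
    (α : EuclideanSpace ℝ (Fin K)) : EuclideanSpace ℝ (Fin K) :=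
  (1 / (N : ℝ)) • ∑ i ∈ Finset.univ.filter (fun i => b i ≤ ⟪φ i, α⟫), φ i

/-- `dsub` is a genuine subgradient of the convex function `fpwm`. -/
lemma key_subgrad {K N : ℕ} (φ : Fin N → EuclideanSpace ℝ (Fin K)) (b : Fin N → ℝ)
    (x y : EuclideanSpace ℝ (Fin K)) :
    fpwm φ b x + ⟪y - x, dsub φ b x⟫ ≤ fpwm φ b y := by
  set S := Finset.univ.filter (fun i => b i ≤ ⟪φ i, x⟫) with hS
  have hinner : ⟪y - x, dsub φ b x⟫ =
      (1 / (N : ℝ)) * ∑ i ∈ S, (⟪φ i, y⟫ - ⟪φ i, x⟫) := by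
    rw [dsub, real_inner_smul_right, inner_sum]
    congr 1
    refine Finset.sum_congr rfl fun i _ => ?_
    rw [inner_sub_left, real_inner_comm y (φ i), real_inner_comm x (φ i)]
  rw [hinner, fpwm, fpwm, ← mul_add]
  apply mul_le_mul_of_nonneg_left _ (by positivity)
  have h1 : ∑ i ∈ S, (⟪φ i, y⟫ - ⟪φ i, x⟫) ≤
      ∑ i, (max ⟪φ i, y⟫ (b i) - max ⟪φ i, x⟫ (b i)) := by
    refine le_trans (Finset.sum_le_sum fun i hi => ?_)
      (Finset.sum_le_sum_of_subset_of_nonneg (Finset.subset_univ S) fun i _ hi => ?_)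
    · have hb : b i ≤ ⟪φ i, x⟫ := (Finset.mem_filter.mp hi).2
      have : max ⟪φ i, x⟫ (b i) = ⟪φ i, x⟫ := max_eq_left hb
      have h2 : ⟪φ i, y⟫ ≤ max ⟪φ i, y⟫ (b i) := le_max_left _ _
      linarith
    · have hb : ⟪φ i, x⟫ < b i := by
        by_contra h
        exact hi (Finset.mem_filter.mpr ⟨Finset.mem_univ i, not_lt.mp h⟩)
      have : max ⟪φ i, x⟫ (b i) = b i := max_eq_right hb.le
      have h2 : b i ≤ max ⟪φ i, y⟫ (b i) := le_max_right _ _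
      linarith
  simp only [Finset.sum_sub_distrib] at h1 ⊢
  linarith

/-- Theorem 1 of the paper combined with the explicit subgradient formula:
Algorithm 1 applied to `fpwm` over a feasible set `C` on which `fpwm` is bounded above
produces (a) a non-decreasing convergent objective sequence, (b) terminates in finitely
many iterations for any tolerance `ε > 0`, and (c) satisfies the first-order necessary
optimality condition in the limit. -/
theorem stmt_8 {K N : ℕ} (φ : Fin N → EuclideanSpace ℝ (Fin K)) (b : Fin N → ℝ)
    (C : Set (EuclideanSpace ℝ (Fin K)))
    (hbdd : BddAbove (fpwm φ b '' C))
    (α : ℕ → EuclideanSpace ℝ (Fin K))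
    (hα0 : α 0 ∈ C)
    (hstep : ∀ k : ℕ, α (k + 1) ∈ C ∧
      ∀ z ∈ C, ⟪z, dsub φ b (α k)⟫ ≤ ⟪α (k + 1), dsub φ b (α k)⟫) :
    Monotone (fun k => fpwm φ b (α k)) ∧
      (∃ L : ℝ, Filter.Tendsto (fun k => fpwm φ b (α k)) Filter.atTop (nhds L)) ∧
      (∀ ε > (0 : ℝ), ∃ k ≥ 1, fpwm φ b (α k) - fpwm φ b (α (k - 1)) < ε) ∧
      Filter.Tendsto (fun k => (⟪α (k + 1) - α k, dsub φ b (α k)⟫ : ℝ))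
        Filter.atTop (nhds 0) := by
  have hmem : ∀ k, α k ∈ C := by
    intro k
    induction k with
    | zero => exact hα0
    | succ n _ => exact (hstep n).1
  have hgap : ∀ k, 0 ≤ (⟪α (k + 1) - α k, dsub φ b (α k)⟫ : ℝ) := by
    intro k
    have h := (hstep k).2 (α k) (hmem k)
    rw [inner_sub_left]
    linarith
  have hsg : ∀ k, fpwm φ b (α k) + ⟪α (k + 1) - α k, dsub φ b (α k)⟫
      ≤ fpwm φ b (α (k + 1)) := fun k => key_subgrad φ b (α k) (α (k + 1))
  have hmono : Monotone (fun k => fpwm φ b (α k)) := by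
    apply monotone_nat_of_le_succ
    intro k
    have h1 := hsg k
    have h2 := hgap k
    linarith
  have hbdd' : BddAbove (Set.range fun k => fpwm φ b (α k)) :=
    hbdd.mono (Set.range_subset_iff.mpr fun k => Set.mem_image_of_mem (fpwm φ b) (hmem k))
  have hconv : Filter.Tendsto (fun k => fpwm φ b (α k)) Filter.atTop
      (nhds (⨆ k, fpwm φ b (α k))) := tendsto_atTop_ciSup hmono hbdd'
  have hdiff0 : Filter.Tendsto (fun k => fpwm φ b (α (k + 1)) - fpwm φ b (α k))
      Filter.atTop (nhds 0) := by
    have h1 : Filter.Tendsto (fun k => fpwm φ b (α (k + 1))) Filter.atTop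
        (nhds (⨆ k, fpwm φ b (α k))) :=
      hconv.comp (Filter.tendsto_add_atTop_nat 1)
    have := h1.sub hconv
    simpa using this
  refine ⟨hmono, ⟨_, hconv⟩, ?_, ?_⟩
  · intro ε hε
    obtain ⟨k, hk⟩ := (hdiff0.eventually_lt_const hε).exists
    exact ⟨k + 1, Nat.le_add_left 1 k, by simpa using hk⟩
  · refine squeeze_zero hgap (fun k => ?_) hdiff0
    have := hsg k
    linarith
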